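/- Let E be a finite-dimensional real inner product space and J : E → ℝ be differentiable with L-Lipschitz gradient (L > 0) and bounded from below (inf J > −∞). Let η > 0, and let (θ^m)_{m≥1} be a sequence in E generated by θ^{m+1} = θ^m − (Δ^m)⁻¹(∇J(θ^m) − e^m), where each Δ^m is an invertible symmetric linear map with ⟨Δ^m v, v⟩ ≥ (1/η)‖v‖² for all v, and ‖e^m‖ ≤ ε̄ for all m with ε̄ ≥ 0. Set γ^m = θ^{m+1} − θ^m. Then for every M ≥ 1, the partial sum ∑_{m=1}^{M} [ ((2 − Lη)/(2η)) ‖γ^m‖² − ε̄ ‖γ^m‖ ] ≤ J(θ¹) − inf J. -/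

import Mathlib

open Filter Finset
open scoped RealInnerProductSpace

theorem descent_lemma
    {E : Type*} [NormedAddCommGroup E] [InnerProductSpace ℝ E] [CompleteSpace E]
    (J : E → ℝ) (L : ℝ) (hL : 0 ≤ L)
    (hJd : Differentiable ℝ J)
    (hlip : ∀ x y : E, ‖gradient J x - gradient J y‖ ≤ L * ‖x - y‖)
    (x y : E) :
    J y ≤ J x + ⟪gradient J x, y - x⟫ + L / 2 * ‖y - x‖ ^ 2 := by
  set v := y - x with hv
  have hgradcont : Continuous fun z => gradient J z := by
    refine (LipschitzWith.of_dist_le_mul (K := L.toNNReal) ?_).continuous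
    intro a b
    simpa [dist_eq_norm, Real.coe_toNNReal L hL] using hlip a b
  have hderiv : ∀ t : ℝ, HasDerivAt (fun t : ℝ => J (x + t • v))
      (⟪gradient J (x + t • v), v⟫) t := by
    intro t
    have h1 : HasDerivAt (fun t : ℝ => x + t • v) v t := by
      simpa using ((hasDerivAt_id t).smul_const v).const_add x
    have h2 := ((hJd (x + t • v)).hasFDerivAt).comp_hasDerivAt t h1
    have h3 : fderiv ℝ J (x + t • v) v = ⟪gradient J (x + t • v), v⟫ := by
      rw [gradient]
      simp
    rw [← h3]
    exact h2
  have hφcont : Continuous fun t : ℝ => ⟪gradient J (x + t • v), v⟫ := by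
    exact (hgradcont.comp (by continuity)).inner continuous_const
  have hftc : J y - J x = ∫ t in (0:ℝ)..1, ⟪gradient J (x + t • v), v⟫ := by
    have := intervalIntegral.integral_eq_sub_of_hasDerivAt
      (f := fun t : ℝ => J (x + t • v))
      (fun t _ => hderiv t) (hφcont.intervalIntegrable 0 1)
    simpa [hv] using this.symm
  have hmono : ∫ t in (0:ℝ)..1, ⟪gradient J (x + t • v), v⟫
      ≤ ∫ t in (0:ℝ)..1, (⟪gradient J x, v⟫ + L * t * ‖v‖ ^ 2) := by
    apply intervalIntegral.integral_mono_on (by norm_num)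
      (hφcont.intervalIntegrable 0 1) (by apply Continuous.intervalIntegrable; continuity)
    intro t ht
    rcases ht with ⟨ht0, _⟩
    have key : ⟪gradient J (x + t • v) - gradient J x, v⟫ ≤ L * t * ‖v‖ ^ 2 := by
      calc ⟪gradient J (x + t • v) - gradient J x, v⟫
          ≤ ‖gradient J (x + t • v) - gradient J x‖ * ‖v‖ := real_inner_le_norm _ _
        _ ≤ (L * ‖(x + t • v) - x‖) * ‖v‖ := by
            gcongr; exact hlip _ _
        _ = L * t * ‖v‖ ^ 2 := by
            simp [norm_smul, abs_of_nonneg ht0]; ring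
    have : ⟪gradient J (x + t • v), v⟫ = ⟪gradient J x, v⟫ +
        ⟪gradient J (x + t • v) - gradient J x, v⟫ := by
      rw [inner_sub_left]; ring
    linarith
  have hcalc : ∫ t in (0:ℝ)..1, (⟪gradient J x, v⟫ + L * t * ‖v‖ ^ 2)
      = ⟪gradient J x, v⟫ + L / 2 * ‖v‖ ^ 2 := by
    rw [intervalIntegral.integral_add (by apply Continuous.intervalIntegrable; continuity)
      (by apply Continuous.intervalIntegrable; continuity)]
    simp only [intervalIntegral.integral_const, mul_assoc]
    rw [intervalIntegral.integral_const_mul]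
    rw [intervalIntegral.integral_mul_const, integral_id]
    norm_num; ring
  have := hftc
  nlinarith [hmono, hcalc, hftc]

/-- Telescoping bound (key step in Theorem 1): summing the per-iteration decrease bound
of Proposition 2 over `m = 1, …, M` gives
`∑_{m=1}^M [((2−Lη)/(2η))‖γ^m‖² − ε̄‖γ^m‖] ≤ J(θ¹) − inf J`. -/
theorem newton_iteration_telescoping_bound
    {E : Type*} [NormedAddCommGroup E] [InnerProductSpace ℝ E] [FiniteDimensional ℝ E]
    (J : E → ℝ) (L : ℝ) (hL : 0 < L)
    (hJd : Differentiable ℝ J)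
    (hlip : ∀ x y : E, ‖gradient J x - gradient J y‖ ≤ L * ‖x - y‖)
    (hbdd : BddBelow (Set.range J))
    (η : ℝ) (hη : 0 < η)
    (θ : ℕ → E) (Δ : ℕ → E ≃ₗ[ℝ] E) (e : ℕ → E) (ε : ℝ) (hε : 0 ≤ ε)
    (hsym : ∀ m, ∀ u v : E, ⟪Δ m u, v⟫ = ⟪u, Δ m v⟫)
    (hlower : ∀ m, ∀ v : E, (1 / η) * ‖v‖ ^ 2 ≤ ⟪Δ m v, v⟫)
    (herr : ∀ m, ‖e m‖ ≤ ε)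
    (hupd : ∀ m, θ (m + 1) = θ m - (Δ m).symm (gradient J (θ m) - e m)) :
    ∀ M : ℕ, 1 ≤ M →
      ∑ m ∈ Finset.Icc 1 M,
          (((2 - L * η) / (2 * η)) * ‖θ (m + 1) - θ m‖ ^ 2 - ε * ‖θ (m + 1) - θ m‖)
        ≤ J (θ 1) - sInf (Set.range J) := by
  -- per-step bound
  have hstep : ∀ m : ℕ, J (θ (m + 1)) ≤ J (θ m) -
      (((2 - L * η) / (2 * η)) * ‖θ (m + 1) - θ m‖ ^ 2 - ε * ‖θ (m + 1) - θ m‖) := by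
    intro m
    set γ := θ (m + 1) - θ m with hγ
    have hΔγ : gradient J (θ m) = e m - Δ m γ := by
      have : γ = -(Δ m).symm (gradient J (θ m) - e m) := by
        rw [hγ, hupd m]; abel
      have h2 : Δ m γ = -(gradient J (θ m) - e m) := by
        rw [this, map_neg, (Δ m).apply_symm_apply]
      rw [eq_comm] at h2
      rw [← h2]; abel
    have hinner : ⟪gradient J (θ m), γ⟫ ≤ ε * ‖γ‖ - (1 / η) * ‖γ‖ ^ 2 := by
      have h1 : ⟪gradient J (θ m), γ⟫ = ⟪e m, γ⟫ - ⟪Δ m γ, γ⟫ := by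
        rw [hΔγ, inner_sub_left]
      have h2 : ⟪e m, γ⟫ ≤ ε * ‖γ‖ := by
        calc ⟪e m, γ⟫ ≤ ‖e m‖ * ‖γ‖ := real_inner_le_norm _ _
          _ ≤ ε * ‖γ‖ := by gcongr; exact herr m
      have h3 := hlower m γ
      linarith
    have hdesc := descent_lemma J L hL.le hJd hlip (θ m) (θ (m + 1))
    rw [← hγ] at hdesc
    have heq : (2 - L * η) / (2 * η) = 1 / η - L / 2 := by field_simp
    nlinarith [hdesc, hinner]
  -- telescoping
  have htel : ∀ M : ℕ,
      ∑ m ∈ Finset.Icc 1 M,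
          (((2 - L * η) / (2 * η)) * ‖θ (m + 1) - θ m‖ ^ 2 - ε * ‖θ (m + 1) - θ m‖)
        ≤ J (θ 1) - J (θ (M + 1)) := by
    intro M
    induction M with
    | zero => simp
    | succ n ih =>
      rw [Finset.sum_Icc_succ_top (by omega)]
      have := hstep (n + 1)
      linarith
  intro M _
  have hinf : sInf (Set.range J) ≤ J (θ (M + 1)) := csInf_le hbdd ⟨θ (M + 1), rfl⟩
  have := htel M
  linarith
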